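/- Let 1 ≤ p < ∞ and f ∈ L^p(G_m). If ‖σ_{M_n} f − f‖_p = o(1/M_n) as n → ∞, then f is almost everywhere equal to a constant. -/

import Mathlib

noncomputable section
open MeasureTheory Finset Filter

namespace VilPaper

instance (n : ℕ) : TopologicalSpace (ZMod n) := ⊥
instance (n : ℕ) : DiscreteTopology (ZMod n) := ⟨rfl⟩

variable (m : ℕ → ℕ)

abbrev mseq (k : ℕ) : ℕ := m k + 2
abbrev G := ∀ k, ZMod (mseq m k)

instance : IsTopologicalAddGroup (G m) := by infer_instance
instance : CompactSpace (G m) := by infer_instance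
instance : MeasurableSpace (G m) := borel _
instance : BorelSpace (G m) := ⟨rfl⟩

def μV : Measure (G m) := Measure.addHaarMeasure ⊤

/-- The generalized number system: `M_0 = 1`, `M_{k+1} = m_k M_k`. -/
def Mgen : ℕ → ℕ
  | 0 => 1
  | k + 1 => mseq m k * Mgen k

/-- The cylinder sets `I_n(x)`. -/
def cyl (n : ℕ) (x : G m) : Set (G m) := {y | ∀ i < n, y i = x i}

/-- `I_n := I_n(0)`. -/
def Icyl (n : ℕ) : Set (G m) := cyl m n 0

/-- Generalized Rademacher functions `r_k(x) = exp(2πi x_k / m_k)`. -/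
def rad (k : ℕ) (x : G m) : ℂ :=
  Complex.exp (2 * Real.pi * Complex.I * ((x k).val : ℂ) / (mseq m k : ℂ))

/-- The `j`-th digit `n_j` of `n` in the number system `(M_k)`. -/
def digit (n j : ℕ) : ℕ := n / Mgen m j % mseq m j

/-- `|n| = max { j : n_j ≠ 0 }`. -/
def ndeg (n : ℕ) : ℕ := sSup {j | digit m n j ≠ 0}

/-- The Vilenkin system `ψ_n = ∏ r_k^{n_k}`. -/
def psi (n : ℕ) (x : G m) : ℂ := ∏ k ∈ Finset.range (n + 1), rad m k x ^ digit m n k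

/-- Dirichlet kernels `D_n = ∑_{k<n} ψ_k`. -/
def Dker (n : ℕ) (x : G m) : ℂ := ∑ k ∈ Finset.range n, psi m k x

/-- Fejér kernels `K_n = (1/n) ∑_{k=1}^n D_k`. -/
def Kker (n : ℕ) (x : G m) : ℂ := (n : ℂ)⁻¹ * ∑ k ∈ Finset.range n, Dker m (k + 1) x

/-- Vilenkin–Fourier coefficients. -/
def fcoef (f : G m → ℂ) (k : ℕ) : ℂ := ∫ x, f x * (starRingEnd ℂ) (psi m k x) ∂ μV m

/-- Partial sums `S_n f` of the Vilenkin–Fourier series. -/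
def partialSum (f : G m → ℂ) (n : ℕ) (x : G m) : ℂ :=
  ∑ k ∈ Finset.range n, fcoef m f k * psi m k x

/-- Fejér means `σ_n f = (1/n) ∑_{k=1}^n S_k f`. -/
def fejer (f : G m → ℂ) (n : ℕ) (x : G m) : ℂ :=
  (n : ℂ)⁻¹ * ∑ k ∈ Finset.range n, partialSum m f (k + 1) x

/-- `Q_n = ∑_{k<n} q_k`. -/
def Qsum (q : ℕ → ℝ) (n : ℕ) : ℝ := ∑ k ∈ Finset.range n, q k

/-- The `T` means `T_n f = (1/Q_n) ∑_{k<n} q_k S_k f`. -/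
def Tmean (q : ℕ → ℝ) (f : G m → ℂ) (n : ℕ) (x : G m) : ℂ :=
  (Qsum q n : ℂ)⁻¹ * ∑ k ∈ Finset.range n, (q k : ℂ) * partialSum m f k x

/-- Convolution on `G_m`. -/
def conv (f g : G m → ℂ) (x : G m) : ℂ := ∫ t, f t * g (x - t) ∂ μV m

/-- The modulus of continuity `ω_p(δ, f) = sup_{t ∈ I_s, 1/M_s < δ} ‖f(·-t) - f‖_p`. -/
def omega (p : ENNReal) (f : G m → ℂ) (δ : ℝ) : ENNReal :=
  ⨆ (s : ℕ) (_ : (1 : ℝ) / (Mgen m s : ℝ) < δ) (t : G m) (_ : t ∈ Icyl m s),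
    eLpNorm (fun x => f (x - t) - f x) p (μV m)

/-- The Lipschitz class `Lip(α, p)`. -/
def LipClass (p : ENNReal) (α : ℝ) (f : G m → ℂ) : Prop :=
  MemLp f p (μV m) ∧ ∃ C : ℝ, ∀ δ : ℝ, 0 < δ → omega m p f δ ≤ ENNReal.ofReal (C * δ ^ α)

theorem Mgen_pos (k : ℕ) : 0 < Mgen m k := by
  induction k with
  | zero => simp [Mgen]
  | succ k ih => rw [Mgen]; positivity

theorem two_pow_le_Mgen (k : ℕ) : 2 ^ k ≤ Mgen m k := by
  induction k with
  | zero => simp [Mgen]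
  | succ k ih =>
    rw [Mgen, pow_succ']
    exact Nat.mul_le_mul (by simp [mseq]) ih

theorem digit_eq_zero_of_lt {n k : ℕ} (h : n < Mgen m k) : digit m n k = 0 := by
  rw [digit, Nat.div_eq_of_lt h]; simp

theorem digit_zero_right (k : ℕ) : digit m 0 k = 0 := by simp [digit]

theorem digit_high {n k : ℕ} (h : n < 2 ^ k) : digit m n k = 0 :=
  digit_eq_zero_of_lt m (lt_of_lt_of_le h (two_pow_le_Mgen m k))

theorem digit_lt (n k : ℕ) : digit m n k < mseq m k := Nat.mod_lt _ (by positivity)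

theorem digit_zero' (n : ℕ) : digit m n 0 = n % mseq m 0 := by simp [digit, Mgen]

theorem Mgen_shift (k : ℕ) : Mgen m (k + 1) = mseq m 0 * Mgen (fun i => m (i + 1)) k := by
  induction k with
  | zero => simp [Mgen, mseq]
  | succ k ih => rw [Mgen, ih, Mgen]; ring

theorem digit_succ (n k : ℕ) :
    digit m n (k + 1) = digit (fun i => m (i + 1)) (n / mseq m 0) k := by
  rw [digit, digit, Nat.div_div_eq_div_mul, ← Mgen_shift]

theorem eq_zero_of_digit_zero : ∀ (j : ℕ) (m : ℕ → ℕ), (∀ i, digit m j i = 0) → j = 0 := by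
  intro j
  induction j using Nat.strong_induction_on with
  | _ j IH =>
    intro m h
    rcases Nat.eq_zero_or_pos j with hj | hj
    · exact hj
    · have h0 : j % mseq m 0 = 0 := by have := h 0; rwa [digit_zero'] at this
      have hrec : j / mseq m 0 = 0 := by
        apply IH (j / mseq m 0) (Nat.div_lt_self hj (by simp [mseq])) (fun i => m (i + 1))
        intro i
        have := h (i + 1)
        rwa [digit_succ] at this
      have hj' := Nat.div_add_mod j (mseq m 0)
      rw [hrec, h0] at hj'
      omega

theorem digit_injective : ∀ k, ∀ (m : ℕ → ℕ) (j : ℕ),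
    (∀ i, digit m k i = digit m j i) → k = j := by
  intro k
  induction k using Nat.strong_induction_on with
  | _ k IH =>
    intro m j h
    rcases Nat.eq_zero_or_pos k with hk | hk
    · subst hk
      refine (eq_zero_of_digit_zero j m fun i => ?_).symm
      rw [← h i, digit_zero_right]
    · have h0 : k % mseq m 0 = j % mseq m 0 := by
        have := h 0; rwa [digit_zero', digit_zero'] at this
      have hrec : k / mseq m 0 = j / mseq m 0 := by
        apply IH (k / mseq m 0) (Nat.div_lt_self hk (by simp [mseq])) (fun i => m (i + 1))
        intro i
        have := h (i + 1)
        rwa [digit_succ, digit_succ] at this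
      have hk' := Nat.div_add_mod k (mseq m 0)
      have hj' := Nat.div_add_mod j (mseq m 0)
      rw [hrec, h0] at hk'
      omega
instance msNeZero (k : ℕ) : NeZero (mseq m k) := ⟨by simp [mseq]⟩

theorem exp_mod_eq (N : ℕ) (hN : N ≠ 0) (a b : ℕ) (h : a % N = b % N) :
    Complex.exp (2 * Real.pi * Complex.I * a / N) =
      Complex.exp (2 * Real.pi * Complex.I * b / N) := by
  rw [Complex.exp_eq_exp_iff_exists_int]
  refine ⟨(a : ℤ) / N - (b : ℤ) / N, ?_⟩
  have ha : (N : ℤ) * ((a / N : ℕ) : ℤ) + ((a % N : ℕ) : ℤ) = a := by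
    exact_mod_cast Nat.div_add_mod a N
  have hb : (N : ℤ) * ((b / N : ℕ) : ℤ) + ((b % N : ℕ) : ℤ) = b := by
    exact_mod_cast Nat.div_add_mod b N
  have hc : ((a % N : ℕ) : ℤ) = ((b % N : ℕ) : ℤ) := by exact_mod_cast h
  have key' : (a : ℤ) - b = ((a / N : ℕ) : ℤ) * N - ((b / N : ℕ) : ℤ) * N := by linarith
  have key'' : (a : ℤ) - b = (a : ℤ) / N * N - (b : ℤ) / N * N := by
    rw [Int.natCast_ediv, Int.natCast_ediv] at key'; exact key'
  have keyC : (a : ℂ) - b = (((a : ℤ) / N : ℤ) : ℂ) * N - (((b : ℤ) / N : ℤ) : ℂ) * N := by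
    exact_mod_cast congrArg (Int.cast : ℤ → ℂ) key''
  have hN' : (N : ℂ) ≠ 0 := Nat.cast_ne_zero.mpr hN
  field_simp
  push_cast
  linear_combination keyC

theorem rad_add (k : ℕ) (x t : G m) : rad m k (x + t) = rad m k x * rad m k t := by
  unfold rad
  rw [← Complex.exp_add]
  have hadd : ((x + t) k).val = (x k + t k).val := rfl
  rw [hadd, ZMod.val_add]
  rw [exp_mod_eq (mseq m k) (NeZero.ne _) _ ((x k).val + (t k).val)
    (Nat.mod_mod_of_dvd _ dvd_rfl)]
  push_cast
  ring

theorem abs_rad (k : ℕ) (x : G m) : ‖rad m k x‖ = 1 := by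
  unfold rad
  have : 2 * Real.pi * Complex.I * ((x k).val : ℂ) / (mseq m k : ℂ)
      = ((2 * Real.pi * (x k).val / (mseq m k) : ℝ) : ℂ) * Complex.I := by
    push_cast
    ring
  rw [this, Complex.norm_exp_ofReal_mul_I]

theorem rad_ne_zero (k : ℕ) (x : G m) : rad m k x ≠ 0 := by
  intro h
  have := abs_rad m k x
  rw [h] at this
  simp at this

theorem conj_rad (k : ℕ) (x : G m) : (starRingEnd ℂ) (rad m k x) = (rad m k x)⁻¹ :=
  (Complex.inv_eq_conj (abs_rad m k x)).symm

theorem abs_psi (n : ℕ) (x : G m) : ‖psi m n x‖ = 1 := by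
  unfold psi
  rw [norm_prod]
  refine Finset.prod_eq_one fun k _ => ?_
  rw [norm_pow, abs_rad, one_pow]

theorem psi_zero (x : G m) : psi m 0 x = 1 := by
  simp [psi, digit_zero_right]

theorem psi_extend (n N : ℕ) (hn : n ≤ N) (x : G m) :
    psi m n x = ∏ k ∈ Finset.range (N + 1), rad m k x ^ digit m n k := by
  unfold psi
  refine Finset.prod_subset (Finset.range_subset_range.mpr (by omega)) ?_
  intro k _ hk
  simp only [Finset.mem_range, not_lt] at hk
  rw [digit_high m (lt_of_lt_of_le (Nat.lt_two_pow_self (n := n))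
    (Nat.pow_le_pow_right (by norm_num) (by omega))), pow_zero]

theorem psi_add (n : ℕ) (x t : G m) : psi m n (x + t) = psi m n x * psi m n t := by
  unfold psi
  rw [← Finset.prod_mul_distrib]
  refine Finset.prod_congr rfl fun k _ => ?_
  rw [rad_add, mul_pow]

theorem psi_continuous (n : ℕ) : Continuous (psi m n) := by
  unfold psi
  refine continuous_finset_prod _ fun k _ => Continuous.pow ?_ _
  unfold rad
  fun_prop
instance : IsProbabilityMeasure (μV m) := by
  constructor
  rw [μV, ← TopologicalSpace.PositiveCompacts.coe_top]
  exact Measure.addHaarMeasure_self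

instance : (μV m).IsAddLeftInvariant := by unfold μV; infer_instance

theorem exp_inj (N : ℕ) (hN : 0 < N) (a b : ℕ) (ha : a < N) (hb : b < N)
    (h : Complex.exp (2 * Real.pi * Complex.I * a / N) =
      Complex.exp (2 * Real.pi * Complex.I * b / N)) : a = b := by
  rw [Complex.exp_eq_exp_iff_exists_int] at h
  obtain ⟨n, hn⟩ := h
  have hN' : (N : ℂ) ≠ 0 := Nat.cast_ne_zero.mpr hN.ne'
  have hC : (a : ℂ) = b + n * N := by
    field_simp at hn
    have h2 : (2 : ℂ) * Real.pi * Complex.I ≠ 0 := by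
      simp [Complex.I_ne_zero, Real.pi_ne_zero, Complex.ofReal_ne_zero]
    apply mul_left_cancel₀ h2
    linear_combination (2 * (Real.pi : ℂ) * Complex.I) * hn
  have hZ : (a : ℤ) = b + n * N := by exact_mod_cast hC
  have ha' : (a : ℤ) < N := by exact_mod_cast ha
  have hb' : (b : ℤ) < N := by exact_mod_cast hb
  have ha0 : (0 : ℤ) ≤ a := Int.natCast_nonneg a
  have hb0 : (0 : ℤ) ≤ b := Int.natCast_nonneg b
  have hN0 : (0 : ℤ) < N := by exact_mod_cast hN
  have hn0 : n = 0 := by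
    rcases lt_trichotomy n 0 with hc | hc | hc
    · have h1 : n ≤ -1 := by omega
      have : n * N ≤ -1 * N := by exact mul_le_mul_of_nonneg_right h1 hN0.le
      linarith
    · exact hc
    · have h1 : 1 ≤ n := by omega
      have : 1 * N ≤ n * N := by exact mul_le_mul_of_nonneg_right h1 hN0.le
      linarith
  rw [hn0] at hZ
  exact_mod_cast by simpa using hZ

theorem rad_single_ne (i k : ℕ) (hk : k ≠ i) :
    rad m k (Pi.single i (1 : ZMod (mseq m i))) = 1 := by
  unfold rad
  have : (Pi.single i (1 : ZMod (mseq m i)) : G m) k = 0 := Pi.single_eq_of_ne hk _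
  rw [this]
  simp

theorem val_one_mseq (i : ℕ) : (1 : ZMod (mseq m i)).val = 1 := by
  rw [ZMod.val_one_eq_one_mod, Nat.mod_eq_of_lt (by simp [mseq])]

theorem integral_psi_mul_conj (K J : ℕ) :
    ∫ x, psi m K x * (starRingEnd ℂ) (psi m J x) ∂(μV m) = if K = J then 1 else 0 := by
  rcases eq_or_ne K J with rfl | hKJ
  · simp only [if_pos rfl]
    have : ∀ x : G m, psi m K x * (starRingEnd ℂ) (psi m K x) = 1 := by
      intro x
      rw [Complex.mul_conj]
      norm_cast
      rw [Complex.normSq_eq_norm_sq, abs_psi]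
      norm_num
    simp_rw [this]
    simp
  · rw [if_neg hKJ]
    set χ : G m → ℂ := fun x => psi m K x * (starRingEnd ℂ) (psi m J x) with hχ
    have hadd : ∀ t x, χ (t + x) = χ t * χ x := by
      intro t x
      simp only [hχ, psi_add, map_mul]
      ring
    obtain ⟨i, hi⟩ : ∃ i, digit m K i ≠ digit m J i := by
      by_contra hcon
      push_neg at hcon
      exact hKJ (digit_injective K m J hcon)
    set t : G m := Pi.single i (1 : ZMod (mseq m i)) with ht
    set N₀ := max K J with hN₀
    have hiN : i ≤ N₀ := by
      by_contra hcon
      push_neg at hcon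
      apply hi
      have hKi : K < 2 ^ i := lt_of_le_of_lt (le_trans (le_max_left K J) (by omega))
        (Nat.lt_two_pow_self (n := i))
      have hJi : J < 2 ^ i := lt_of_le_of_lt (le_trans (le_max_right K J) (by omega))
        (Nat.lt_two_pow_self (n := i))
      rw [digit_high m hKi, digit_high m hJi]
    have hpp : ∀ (n : ℕ), n ≤ N₀ → psi m n t =
        rad m i t ^ digit m n i := by
      intro n hn
      rw [psi_extend m n N₀ hn]
      refine Finset.prod_eq_single_of_mem i (Finset.mem_range.mpr (by omega)) ?_
      intro k _ hk
      rw [rad_single_ne m i k hk, one_pow]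
    have hchit : χ t = rad m i t ^ digit m K i * ((rad m i t ^ digit m J i)⁻¹) := by
      rw [hχ]
      simp only [hpp K (le_max_left _ _), hpp J (le_max_right _ _)]
      rw [map_pow, conj_rad]
      rw [inv_pow]
    have hradit : rad m i t = Complex.exp (2 * Real.pi * Complex.I * 1 / mseq m i) := by
      unfold rad
      rw [ht, Pi.single_eq_same, val_one_mseq]
      norm_num
    have hchine : χ t ≠ 1 := by
      rw [hchit]
      intro hcon
      have hne : rad m i t ^ digit m J i ≠ 0 := pow_ne_zero _ (rad_ne_zero m i t)
      rw [mul_inv_eq_one₀ hne] at hcon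
      apply hi
      refine exp_inj (mseq m i) (by positivity) _ _ (digit_lt m K i) (digit_lt m J i) ?_
      have e1 : ∀ d : ℕ, rad m i t ^ d = Complex.exp (2 * Real.pi * Complex.I * d / mseq m i) := by
        intro d
        rw [hradit, ← Complex.exp_nat_mul]
        congr 1
        push_cast
        ring
      rw [e1, e1] at hcon
      exact hcon
    have hinv : ∫ x, χ x ∂(μV m) = χ t * ∫ x, χ x ∂(μV m) := by
      conv_lhs => rw [← integral_add_left_eq_self χ t]
      simp_rw [hadd]
      rw [integral_const_mul]
    have hsub := sub_eq_zero.mpr hinv.symm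
    have h2 : (χ t - 1) * ∫ x, χ x ∂(μV m) = 0 := by linear_combination hsub
    rcases mul_eq_zero.mp h2 with hc | hc
    · exact absurd (by linear_combination hc) hchine
    · exact hc
theorem psi_mul_conj_integrable (K J : ℕ) :
    Integrable (fun x => psi m K x * (starRingEnd ℂ) (psi m J x)) (μV m) := by
  have hc : Continuous fun x => psi m K x * (starRingEnd ℂ) (psi m J x) :=
    (psi_continuous m K).mul (Complex.continuous_conj.comp (psi_continuous m J))
  exact hc.integrable_of_hasCompactSupport (HasCompactSupport.of_compactSpace _)

theorem psi_integrable (K : ℕ) : Integrable (psi m K) (μV m) :=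
  (psi_continuous m K).integrable_of_hasCompactSupport (HasCompactSupport.of_compactSpace _)

theorem fejer_integrable (f : G m → ℂ) (n : ℕ) : Integrable (fejer m f n) (μV m) := by
  unfold fejer partialSum
  apply Integrable.const_mul
  apply integrable_finset_sum
  intro k _
  apply integrable_finset_sum
  intro i _
  exact (psi_integrable m i).const_mul _

theorem fcoef_fejer (f : G m → ℂ) (n j : ℕ) (hj : j < n) :
    fcoef m (fejer m f n) j = ((n - j : ℕ) : ℂ) / n * fcoef m f j := by
  rw [fcoef]
  unfold fejer partialSum
  have step1 : ∀ x : G m, ((n : ℂ)⁻¹ * ∑ k ∈ Finset.range n, ∑ i ∈ Finset.range (k + 1),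
        fcoef m f i * psi m i x) * (starRingEnd ℂ) (psi m j x)
      = (n : ℂ)⁻¹ * ∑ k ∈ Finset.range n, ∑ i ∈ Finset.range (k + 1),
        fcoef m f i * (psi m i x * (starRingEnd ℂ) (psi m j x)) := by
    intro x
    rw [mul_assoc, Finset.sum_mul]
    congr 1
    refine Finset.sum_congr rfl fun k _ => ?_
    rw [Finset.sum_mul]
    exact Finset.sum_congr rfl fun i _ => by ring
  simp_rw [step1]
  rw [integral_const_mul]
  rw [integral_finset_sum _ (fun k _ => integrable_finset_sum _
    (fun i _ => ((psi_mul_conj_integrable m i j).const_mul _)))]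
  have step2 : ∀ k, ∫ x, (∑ i ∈ Finset.range (k + 1),
      fcoef m f i * (psi m i x * (starRingEnd ℂ) (psi m j x))) ∂(μV m)
      = if j < k + 1 then fcoef m f j else 0 := by
    intro k
    rw [integral_finset_sum _ (fun i _ => ((psi_mul_conj_integrable m i j).const_mul _))]
    have : ∀ i ∈ Finset.range (k + 1),
        ∫ x, fcoef m f i * (psi m i x * (starRingEnd ℂ) (psi m j x)) ∂(μV m)
        = if i = j then fcoef m f i else 0 := by
      intro i _
      rw [integral_const_mul, integral_psi_mul_conj]
      split <;> simp
    rw [Finset.sum_congr rfl this, Finset.sum_ite_eq' (Finset.range (k + 1)) j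
      (fun i => fcoef m f i)]
    simp
  simp_rw [step2]
  have step3 : (∑ k ∈ Finset.range n, if j < k + 1 then fcoef m f j else 0)
      = ((n - j : ℕ) : ℂ) * fcoef m f j := by
    rw [← Finset.sum_filter]
    have hfil : (Finset.range n).filter (fun k => j < k + 1) = Finset.Ico j n := by
      ext k
      simp [Finset.mem_filter, Finset.mem_range, Finset.mem_Ico]
      omega
    rw [hfil, Finset.sum_const, Nat.card_Ico]
    simp [nsmul_eq_mul]
  rw [step3]
  ring

theorem norm_fcoef_le (g : G m → ℂ) (hg : Integrable g (μV m)) (j : ℕ) :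
    ‖fcoef m g j‖ ≤ (eLpNorm g 1 (μV m)).toReal := by
  unfold fcoef
  calc ‖∫ x, g x * (starRingEnd ℂ) (psi m j x) ∂(μV m)‖
      ≤ ∫ x, ‖g x * (starRingEnd ℂ) (psi m j x)‖ ∂(μV m) := norm_integral_le_integral_norm _
    _ = ∫ x, ‖g x‖ ∂(μV m) := by
        refine integral_congr_ae (Filter.Eventually.of_forall fun x => ?_)
        show ‖g x * (starRingEnd ℂ) (psi m j x)‖ = ‖g x‖
        rw [norm_mul]
        have : ‖(starRingEnd ℂ) (psi m j x)‖ = 1 := by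
          rw [RCLike.norm_conj]
          simpa using abs_psi m j x
        rw [this, mul_one]
    _ = (eLpNorm g 1 (μV m)).toReal := by
        rw [integral_norm_eq_lintegral_enorm hg.1, eLpNorm_one_eq_lintegral_enorm]

theorem fejer_const_of_coef (f : G m → ℂ) (hcoef : ∀ i, 1 ≤ i → fcoef m f i = 0)
    (n : ℕ) (hn : 0 < n) (x : G m) : fejer m f n x = fcoef m f 0 := by
  unfold fejer partialSum
  have inner : ∀ k, (∑ i ∈ Finset.range (k + 1), fcoef m f i * psi m i x) = fcoef m f 0 := by
    intro k
    rw [Finset.sum_eq_single 0]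
    · rw [psi_zero, mul_one]
    · intro i _ hi
      rw [hcoef i (by omega), zero_mul]
    · simp
  simp_rw [inner]
  rw [Finset.sum_const, Finset.card_range, nsmul_eq_mul]
  rw [← mul_assoc, inv_mul_cancel₀ (by exact_mod_cast hn.ne'), one_mul]

theorem mul_conj_psi_integrable (g : G m → ℂ) (hg : Integrable g (μV m)) (j : ℕ) :
    Integrable (fun x => g x * (starRingEnd ℂ) (psi m j x)) (μV m) := by
  have hc : Continuous (fun x : G m => (starRingEnd ℂ) (psi m j x)) :=
    Complex.continuous_conj.comp (psi_continuous m j)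
  have h := Integrable.bdd_mul (f := fun x : G m => (starRingEnd ℂ) (psi m j x)) hg
    (c := 1) hc.aestronglyMeasurable
    (Filter.Eventually.of_forall fun x => by rw [RCLike.norm_conj]; simpa using (abs_psi m j x).le)
  simpa [mul_comm] using h
/-- `‖σ_{M_n} f - f‖_p = o(1/M_n)` forces `f` to be a.e. constant. -/
theorem fejer_little_o_constant (m : ℕ → ℕ) (R : ℕ) (hR : ∀ k, mseq m k ≤ R)
    (p : ENNReal) (hp1 : 1 ≤ p) (hp2 : p ≠ ⊤)
    (f : G m → ℂ) (hf : MemLp f p (μV m))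
    (ho : ∀ ε : ℝ, 0 < ε → ∃ N : ℕ, ∀ n : ℕ, N ≤ n →
      eLpNorm (fun x => fejer m f (Mgen m n) x - f x) p (μV m) ≤
        ENNReal.ofReal (ε / (Mgen m n : ℝ))) :
    ∃ c : ℂ, f =ᵐ[μV m] fun _ => c := by
  have hfi : Integrable f (μV m) := hf.integrable hp1
  -- Step 1: all nonzero Fourier coefficients vanish
  have hcoef : ∀ j, 1 ≤ j → fcoef m f j = 0 := by
    intro j hj
    have key : ∀ ε : ℝ, 0 < ε → ‖fcoef m f j‖ ≤ ε := by
      intro ε hε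
      obtain ⟨N, hN⟩ := ho ε hε
      set n := max N (j + 1) with hn
      have hMn : 0 < Mgen m n := Mgen_pos m n
      have hjMn : j < Mgen m n :=
        lt_of_lt_of_le (lt_of_lt_of_le (Nat.lt_two_pow_self (n := j))
          (Nat.pow_le_pow_right (by norm_num) (by omega))) (two_pow_le_Mgen m n)
      set g : G m → ℂ := fun x => fejer m f (Mgen m n) x - f x with hg
      have hgbd : eLpNorm g p (μV m) ≤ ENNReal.ofReal (ε / (Mgen m n : ℝ)) :=
        hN n (le_max_left _ _)
      have hgi : Integrable g (μV m) := (fejer_integrable m f _).sub hfi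
      -- compute the j-th coefficient of g
      have hcg : fcoef m g j = (((Mgen m n - j : ℕ) : ℂ) / (Mgen m n : ℂ) - 1) * fcoef m f j := by
        have hsub : fcoef m g j = fcoef m (fejer m f (Mgen m n)) j - fcoef m f j := by
          unfold fcoef
          rw [← integral_sub (mul_conj_psi_integrable m _ (fejer_integrable m f _) j)
            (mul_conj_psi_integrable m f hfi j)]
          congr 1
          funext x
          rw [hg]
          ring
        rw [hsub, fcoef_fejer m f (Mgen m n) j hjMn]
        ring
      -- bound on the coefficient of g
      have hb1 : ‖fcoef m g j‖ ≤ (eLpNorm g 1 (μV m)).toReal := norm_fcoef_le m g hgi j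
      have hb2 : eLpNorm g 1 (μV m) ≤ eLpNorm g p (μV m) :=
        eLpNorm_le_eLpNorm_of_exponent_le hp1 hgi.1
      have hb3 : (eLpNorm g 1 (μV m)).toReal ≤ ε / (Mgen m n : ℝ) := by
        have hle : eLpNorm g 1 (μV m) ≤ ENNReal.ofReal (ε / (Mgen m n : ℝ)) := hb2.trans hgbd
        calc (eLpNorm g 1 (μV m)).toReal
            ≤ (ENNReal.ofReal (ε / (Mgen m n : ℝ))).toReal :=
              ENNReal.toReal_mono ENNReal.ofReal_ne_top hle
          _ = ε / (Mgen m n : ℝ) := ENNReal.toReal_ofReal (by positivity)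
      have hnorm : ‖fcoef m g j‖ = (j : ℝ) / (Mgen m n : ℝ) * ‖fcoef m f j‖ := by
        rw [hcg, norm_mul]
        congr 1
        have hfactor : (((Mgen m n - j : ℕ) : ℂ) / (Mgen m n : ℂ) - 1)
            = -((j : ℂ) / (Mgen m n : ℂ)) := by
          have hMn' : ((Mgen m n : ℕ) : ℂ) ≠ 0 := Nat.cast_ne_zero.mpr hMn.ne'
          rw [Nat.cast_sub hjMn.le]
          field_simp
          ring
        rw [hfactor, norm_neg]
        rw [norm_div]
        simp [Complex.norm_natCast]
      rw [hnorm] at hb1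
      have hfinal : (j : ℝ) * ‖fcoef m f j‖ ≤ ε := by
        have hMnR : (0 : ℝ) < (Mgen m n : ℝ) := by exact_mod_cast hMn
        have := mul_le_mul_of_nonneg_right (hb1.trans hb3) hMnR.le
        calc (j : ℝ) * ‖fcoef m f j‖
            = (j : ℝ) / (Mgen m n : ℝ) * ‖fcoef m f j‖ * (Mgen m n : ℝ) := by
              field_simp
          _ ≤ ε / (Mgen m n : ℝ) * (Mgen m n : ℝ) := this
          _ = ε := by field_simp
      have hj1 : (1 : ℝ) ≤ (j : ℝ) := by exact_mod_cast hj
      nlinarith [norm_nonneg (fcoef m f j)]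
    by_contra hne
    have hpos : 0 < ‖fcoef m f j‖ := norm_pos_iff.mpr hne
    have := key (‖fcoef m f j‖ / 2) (by positivity)
    linarith
  -- Step 2: the Fejér means are constant, so f is a.e. constant
  set c := fcoef m f 0 with hc
  refine ⟨c, ?_⟩
  have hzero : eLpNorm (fun x => c - f x) p (μV m) = 0 := by
    by_contra hnz
    have hpos : 0 < eLpNorm (fun x => c - f x) p (μV m) := pos_iff_ne_zero.mpr hnz
    -- pick ε small
    obtain ⟨ε, hε, hεlt⟩ : ∃ ε : ℝ, 0 < ε ∧
        ENNReal.ofReal ε < eLpNorm (fun x => c - f x) p (μV m) := by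
      rcases eq_or_ne (eLpNorm (fun x => c - f x) p (μV m)) ⊤ with htop | htop
      · exact ⟨1, one_pos, by rw [htop]; exact ENNReal.ofReal_lt_top⟩
      · refine ⟨(eLpNorm (fun x => c - f x) p (μV m)).toReal / 2, ?_, ?_⟩
        · have := ENNReal.toReal_pos hnz htop
          positivity
        · have htR := ENNReal.toReal_pos hnz htop
          conv_rhs => rw [← ENNReal.ofReal_toReal htop]
          exact (ENNReal.ofReal_lt_ofReal_iff htR).mpr (by linarith)
    obtain ⟨N, hN⟩ := ho ε hε
    have hfc : ∀ n : ℕ, N ≤ n →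
        eLpNorm (fun x => c - f x) p (μV m) ≤ ENNReal.ofReal (ε / (Mgen m n : ℝ)) := by
      intro n hn
      have := hN n hn
      have heq : (fun x => fejer m f (Mgen m n) x - f x) = fun x => c - f x := by
        funext x
        rw [fejer_const_of_coef m f hcoef (Mgen m n) (Mgen_pos m n) x]
      rwa [heq] at this
    have h1 := hfc N le_rfl
    have h2 : ENNReal.ofReal (ε / (Mgen m N : ℝ)) ≤ ENNReal.ofReal ε := by
      apply ENNReal.ofReal_le_ofReal
      rw [div_le_iff₀ (by exact_mod_cast Mgen_pos m N)]
      nlinarith [hε.le, (by exact_mod_cast Mgen_pos m N : (0:ℝ) < (Mgen m N : ℝ)),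
        (by exact_mod_cast Nat.one_le_iff_ne_zero.mpr (Mgen_pos m N).ne' : (1:ℝ) ≤ (Mgen m N : ℝ))]
    exact absurd (h1.trans h2) (not_le.mpr hεlt)
  have hp0 : p ≠ 0 := (lt_of_lt_of_le zero_lt_one hp1).ne'
  have hae : (fun x => c - f x) =ᵐ[μV m] 0 := by
    have hm : AEStronglyMeasurable (fun x => c - f x) (μV m) :=
      aestronglyMeasurable_const.sub hf.1
    rw [← eLpNorm_eq_zero_iff hm hp0]
    exact hzero
  filter_upwards [hae] with x hx
  have : c - f x = 0 := hx
  linear_combination -this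

end VilPaper
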